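/- Let t_min > 0 and λ > 0, and let D be the shifted exponential distribution on [t_min, ∞) with cumulative distribution function F(t) = 1 − e^{−λ(t − t_min)} for t ≥ t_min. Then (λ t_min / 2) · ln(1 + 2/(λ t_min)) < E_{t∼D}[ t_min / t ] < λ t_min · ln(1 + 1/(λ t_min)). -/

import Mathlib

open MeasureTheory Real Set Filter
set_option maxHeartbeats 1000000

namespace SEP

noncomputable def dens (tmin l t : ℝ) : ℝ := l * Real.exp (-l * (t - tmin))

lemma dens_pos {tmin l : ℝ} (hl : 0 < l) (t : ℝ) : 0 < dens tmin l t :=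
  mul_pos hl (Real.exp_pos _)

lemma dens_cont (tmin l : ℝ) : Continuous (dens tmin l) := by
  unfold dens; continuity

lemma hasDerivAt_anti (tmin l x : ℝ) :
    HasDerivAt (fun t => -Real.exp (-l * (t - tmin))) (dens tmin l x) x := by
  have h : HasDerivAt (fun t : ℝ => -l * (t - tmin)) (-l) x := by
    simpa using ((hasDerivAt_id x).sub_const tmin).const_mul (-l)
  have h2 := h.exp.neg
  refine h2.congr_deriv ?_
  unfold dens; ring

lemma hasDerivAt_anti2 (tmin l x : ℝ) (hl : l ≠ 0) :
    HasDerivAt (fun t => -((t + 1/l) * Real.exp (-l * (t - tmin))))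
      (x * dens tmin l x) x := by
  have h : HasDerivAt (fun t : ℝ => -l * (t - tmin)) (-l) x := by
    simpa using ((hasDerivAt_id x).sub_const tmin).const_mul (-l)
  have h1 : HasDerivAt (fun t : ℝ => t + 1/l) 1 x := by
    simpa using (hasDerivAt_id x).add_const (1/l)
  have h2 := (h1.mul h.exp).neg
  refine h2.congr_deriv ?_
  unfold dens; field_simp; ring

lemma tendsto1 (tmin l : ℝ) (hl : 0 < l) :
    Tendsto (fun t => -Real.exp (-l * (t - tmin))) atTop (nhds 0) := by
  have h1 : Tendsto (fun t : ℝ => -l * (t - tmin)) atTop atBot := by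
    apply Tendsto.const_mul_atTop_of_neg (neg_lt_zero.2 hl)
    exact tendsto_atTop_add_const_right atTop (-tmin) tendsto_id
  simpa using (Real.tendsto_exp_atBot.comp h1).neg

lemma tendsto2 (tmin l : ℝ) (hl : 0 < l) :
    Tendsto (fun t => -((t + 1/l) * Real.exp (-l * (t - tmin)))) atTop (nhds 0) := by
  have h1 : Tendsto (fun t : ℝ => l * (t - tmin)) atTop atTop := by
    apply Tendsto.const_mul_atTop hl
    exact tendsto_atTop_add_const_right atTop (-tmin) tendsto_id
  have hbase : Tendsto
      (fun u : ℝ => -((1/l) * (u * Real.exp (-u)) + (tmin + 1/l) * Real.exp (-u)))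
      atTop (nhds 0) := by
    have a1 := (Real.tendsto_pow_mul_exp_neg_atTop_nhds_zero 1).const_mul (1/l)
    have a2 := Real.tendsto_exp_neg_atTop_nhds_zero.const_mul (tmin + 1/l)
    simpa using (a1.add a2).neg
  have hcomp := hbase.comp h1
  convert hcomp using 2 with t
  simp only [Function.comp_apply]
  field_simp
  ring

lemma integrable_dens {tmin l : ℝ} (hl : 0 < l) : IntegrableOn (dens tmin l) (Ioi tmin) :=
  integrableOn_Ioi_deriv_of_nonneg' (fun x _ => hasDerivAt_anti tmin l x)
    (fun x _ => (dens_pos hl x).le) (tendsto1 tmin l hl)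

lemma integral_dens {tmin l : ℝ} (hl : 0 < l) : ∫ t in Ioi tmin, dens tmin l t = 1 := by
  rw [integral_Ioi_of_hasDerivAt_of_nonneg' (fun x _ => hasDerivAt_anti tmin l x)
    (fun x _ => (dens_pos hl x).le) (tendsto1 tmin l hl)]
  simp

lemma integrable_id_dens {tmin l : ℝ} (htmin : 0 < tmin) (hl : 0 < l) :
    IntegrableOn (fun t => t * dens tmin l t) (Ioi tmin) :=
  integrableOn_Ioi_deriv_of_nonneg' (fun x _ => hasDerivAt_anti2 tmin l x hl.ne')
    (fun x hx => mul_nonneg (htmin.trans hx).le (dens_pos hl x).le) (tendsto2 tmin l hl)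

lemma integral_id_dens {tmin l : ℝ} (htmin : 0 < tmin) (hl : 0 < l) :
    ∫ t in Ioi tmin, t * dens tmin l t = tmin + 1/l := by
  rw [integral_Ioi_of_hasDerivAt_of_nonneg' (fun x _ => hasDerivAt_anti2 tmin l x hl.ne')
    (fun x hx => mul_nonneg (htmin.trans hx).le (dens_pos hl x).le) (tendsto2 tmin l hl)]
  simp

lemma integrable_ratio_dens {tmin l : ℝ} (htmin : 0 < tmin) (hl : 0 < l) :
    IntegrableOn (fun t => tmin / t * dens tmin l t) (Ioi tmin) := by
  apply MeasureTheory.Integrable.mono (integrable_dens (tmin := tmin) hl)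
  · apply ContinuousOn.aestronglyMeasurable _ measurableSet_Ioi
    apply ContinuousOn.mul _ (dens_cont tmin l).continuousOn
    apply ContinuousOn.div continuousOn_const continuousOn_id
    intro x hx
    exact ne_of_gt (htmin.trans hx)
  · rw [ae_restrict_iff' measurableSet_Ioi]
    filter_upwards with t ht
    have ht0 : 0 < t := htmin.trans ht
    have h1 : tmin / t ≤ 1 := by
      rw [div_le_one ht0]; exact ht.le
    have h2 : 0 ≤ tmin / t := by positivity
    rw [Real.norm_eq_abs, Real.norm_eq_abs, abs_mul, abs_of_nonneg h2]
    calc tmin / t * |dens tmin l t| ≤ 1 * |dens tmin l t| := by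
          apply mul_le_mul_of_nonneg_right h1 (abs_nonneg _)
      _ = |dens tmin l t| := one_mul _

lemma hsplit_gen {tmin s : ℝ} (hs : tmin ≤ s) (h : ℝ → ℝ)
    (hint : IntegrableOn h (Ioi tmin)) :
    ∫ t in Ioi tmin, h t = (∫ t in Ioc tmin s, h t) + ∫ t in Ioi s, h t := by
  rw [← Ioc_union_Ioi_eq_Ioi hs]
  exact setIntegral_union (Ioc_disjoint_Ioi le_rfl) measurableSet_Ioi
    (hint.mono_set Ioc_subset_Ioi_self) (hint.mono_set (Ioi_subset_Ioi hs))

lemma ratio_interval {tmin s : ℝ} (htmin : 0 < tmin) (hs : tmin < s) :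
    ∫ t in tmin..s, tmin / t = tmin * Real.log (s / tmin) := by
  have h0 : (0:ℝ) ∉ uIcc tmin s := by
    rw [Set.uIcc_of_le hs.le]
    intro h
    exact absurd h.1 (not_le.2 htmin)
  calc ∫ t in tmin..s, tmin / t = ∫ t in tmin..s, tmin * (1 / t) := by
        simp_rw [mul_one_div]
    _ = tmin * ∫ t in tmin..s, 1 / t := intervalIntegral.integral_const_mul _ _
    _ = tmin * Real.log (s / tmin) := by rw [integral_one_div h0]


lemma lower_aux {tmin l : ℝ} (htmin : 0 < tmin) (hl : 0 < l) :
    (l * tmin / 2) * Real.log (1 + 2 / (l * tmin)) <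
      ∫ t in Ioi tmin, tmin / t * dens tmin l t := by
  have hlog2pos : (0:ℝ) < Real.log 2 := Real.log_pos (by norm_num)
  have hlog2lt : Real.log 2 < 2 := lt_trans Real.log_two_lt_d9 (by norm_num)
  obtain ⟨t1, ht1def⟩ : ∃ t1, t1 = tmin + Real.log 2 / l := ⟨_, rfl⟩
  obtain ⟨t2, ht2def⟩ : ∃ t2, t2 = tmin + 2 / l := ⟨_, rfl⟩
  have h01 : tmin < t1 := by
    have h : 0 < Real.log 2 / l := div_pos hlog2pos hl
    linarith
  have h12 : t1 < t2 := by
    have h : Real.log 2 / l < 2 / l := by gcongr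
    linarith
  have h02 : tmin < t2 := h01.trans h12
  have ht1pos : 0 < t1 := htmin.trans h01
  have ht2pos : 0 < t2 := htmin.trans h02
  have e1 : t1 ≠ 0 := ht1pos.ne'
  have e2 : t2 ≠ 0 := ht2pos.ne'
  have e3 : l ≠ 0 := hl.ne'
  obtain ⟨L, hLdef⟩ : ∃ L : ℝ → ℝ, L = fun t => tmin * (t1 + t2 - t) / (t1 * t2) := ⟨_, rfl⟩
  have hfact : ∀ t : ℝ, 0 < t →
      tmin / t - L t = tmin * ((t - t1) * (t - t2)) / (t * (t1 * t2)) := by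
    intro t ht
    simp only [hLdef]
    field_simp
    ring
  have hexp_t1 : Real.exp (-l * (t1 - tmin)) = 1 / 2 := by
    have h2 : -l * (t1 - tmin) = -Real.log 2 := by
      rw [ht1def]
      field_simp
      ring
    rw [h2, Real.exp_neg, Real.exp_log (by norm_num : (0:ℝ) < 2)]
    norm_num
  have hdens_ge : ∀ t : ℝ, t ≤ t1 → l / 2 ≤ dens tmin l t := by
    intro t ht
    have h1 : -l * (t1 - tmin) ≤ -l * (t - tmin) := by nlinarith
    have h3 := Real.exp_le_exp.2 h1
    rw [hexp_t1] at h3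
    have := mul_le_mul_of_nonneg_left h3 hl.le
    unfold dens
    linarith
  have hdens_le : ∀ t : ℝ, t1 ≤ t → dens tmin l t ≤ l / 2 := by
    intro t ht
    have h1 : -l * (t - tmin) ≤ -l * (t1 - tmin) := by nlinarith
    have h3 := Real.exp_le_exp.2 h1
    rw [hexp_t1] at h3
    have := mul_le_mul_of_nonneg_left h3 hl.le
    unfold dens
    linarith
  have hGF := integrable_ratio_dens htmin hl
  have hF := integrable_dens (tmin := tmin) hl
  have hTF := integrable_id_dens htmin hl
  have hLrw : (fun t => L t * dens tmin l t)
      = fun t => (tmin * (t1 + t2) / (t1 * t2)) * dens tmin l t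
          - (tmin / (t1 * t2)) * (t * dens tmin l t) := by
    funext t
    simp only [hLdef]
    field_simp
  have hLF : IntegrableOn (fun t => L t * dens tmin l t) (Ioi tmin) := by
    rw [hLrw]
    exact (hF.const_mul _).sub (hTF.const_mul _)
  have hsub1 : Ioc tmin t2 ⊆ Ioi tmin := Ioc_subset_Ioi_self
  have hsub2 : Ioi t2 ⊆ Ioi tmin := Ioi_subset_Ioi h02.le
  have hGIoc : IntegrableOn (fun t => tmin / t) (Ioc tmin t2) := by
    apply IntegrableOn.mono_set _ Ioc_subset_Icc_self
    apply ContinuousOn.integrableOn_Icc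
    apply ContinuousOn.div continuousOn_const continuousOn_id
    intro x hx
    exact ne_of_gt (lt_of_lt_of_le htmin hx.1)
  have hLcont : Continuous L := by
    simp only [hLdef]
    fun_prop
  have hLIoc : IntegrableOn L (Ioc tmin t2) :=
    (hLcont.integrableOn_Icc).mono_set Ioc_subset_Icc_self
  have hcal : (∫ t in Ioc tmin t2, L t * dens tmin l t)
      + (∫ t in Ioi t2, L t * dens tmin l t)
      = (l / 2) * ∫ t in Ioc tmin t2, L t := by
    rw [← hsplit_gen h02.le _ hLF, hLrw,
      integral_sub (hF.const_mul _) (hTF.const_mul _),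
      integral_const_mul, integral_const_mul, integral_dens hl, integral_id_dens htmin hl]
    have hIocL : ∫ t in Ioc tmin t2, L t
        = (tmin * (t1 + t2) / (t1 * t2)) * (t2 - tmin)
          - (tmin / (t1 * t2)) * ((t2 ^ 2 - tmin ^ 2) / 2) := by
      rw [← intervalIntegral.integral_of_le h02.le]
      have hLlin : ∀ t : ℝ, L t = (tmin * (t1 + t2) / (t1 * t2)) - (tmin / (t1 * t2)) * t := by
        intro t
        simp only [hLdef]
        field_simp
      simp_rw [hLlin]
      rw [intervalIntegral.integral_sub intervalIntegrable_const
        ((intervalIntegral.intervalIntegrable_id).const_mul _),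
        intervalIntegral.integral_const, intervalIntegral.integral_const_mul, integral_id]
      rw [smul_eq_mul]
      ring
    have h2ne : tmin + 2 / l ≠ 0 := by positivity
    rw [hIocL, ht2def]
    field_simp
    ring
  have iGF1 : IntegrableOn (fun t => tmin / t * dens tmin l t) (Ioc tmin t2) :=
    hGF.mono_set hsub1
  have iLF1 : IntegrableOn (fun t => L t * dens tmin l t) (Ioc tmin t2) :=
    hLF.mono_set hsub1
  have iG1 : IntegrableOn (fun t => l / 2 * (tmin / t)) (Ioc tmin t2) := hGIoc.const_mul _
  have iL1 : IntegrableOn (fun t => l / 2 * L t) (Ioc tmin t2) := hLIoc.const_mul _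
  have iA : IntegrableOn
      (fun t => tmin / t * dens tmin l t - L t * dens tmin l t) (Ioc tmin t2) :=
    iGF1.sub iLF1
  have iB : IntegrableOn (fun t => l / 2 * (tmin / t) - l / 2 * L t) (Ioc tmin t2) :=
    iG1.sub iL1
  have hX1eq : ∫ t in Ioc tmin t2, (tmin / t - L t) * (dens tmin l t - l / 2)
      = ((∫ t in Ioc tmin t2, tmin / t * dens tmin l t)
          - ∫ t in Ioc tmin t2, L t * dens tmin l t)
        - ((l / 2) * (∫ t in Ioc tmin t2, tmin / t)
          - (l / 2) * ∫ t in Ioc tmin t2, L t) := by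
    have hrw : (fun t => (tmin / t - L t) * (dens tmin l t - l / 2))
        = fun t => (tmin / t * dens tmin l t - L t * dens tmin l t)
            - (l / 2 * (tmin / t) - l / 2 * L t) := by
      funext t
      ring
    rw [hrw, integral_sub iA iB, integral_sub iGF1 iLF1, integral_sub iG1 iL1,
      integral_const_mul, integral_const_mul]
  have hX2eq : ∫ t in Ioi t2, (tmin / t - L t) * dens tmin l t
      = (∫ t in Ioi t2, tmin / t * dens tmin l t)
        - ∫ t in Ioi t2, L t * dens tmin l t := by
    have hrw : (fun t => (tmin / t - L t) * dens tmin l t)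
        = fun t => tmin / t * dens tmin l t - L t * dens tmin l t := by
      funext t
      ring
    rw [hrw, integral_sub (hGF.mono_set hsub2) (hLF.mono_set hsub2)]
  have hX1nonneg : 0 ≤ ∫ t in Ioc tmin t2, (tmin / t - L t) * (dens tmin l t - l / 2) := by
    apply setIntegral_nonneg measurableSet_Ioc
    intro t ht
    have ht0 : 0 < t := htmin.trans ht.1
    rcases le_or_gt t t1 with h | h
    · have hg : 0 ≤ tmin / t - L t := by
        rw [hfact t ht0]
        apply div_nonneg _ (by positivity)
        have hp : 0 ≤ (t1 - t) * (t2 - t) := mul_nonneg (by linarith) (by linarith)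
        nlinarith [mul_nonneg htmin.le hp]
      have hd : 0 ≤ dens tmin l t - l / 2 := by
        linarith [hdens_ge t h]
      exact mul_nonneg hg hd
    · have hg : tmin / t - L t ≤ 0 := by
        rw [hfact t ht0]
        apply div_nonpos_of_nonpos_of_nonneg _ (by positivity)
        have hp : 0 ≤ (t - t1) * (t2 - t) := mul_nonneg (by linarith) (by linarith [ht.2])
        nlinarith [mul_nonneg htmin.le hp]
      have hd : dens tmin l t - l / 2 ≤ 0 := by
        linarith [hdens_le t h.le]
      nlinarith
  have hptX2 : ∀ t ∈ Ioi t2, 0 < (tmin / t - L t) * dens tmin l t := by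
    intro t ht
    have ht' : t2 < t := ht
    have ht0 : 0 < t := ht2pos.trans ht'
    have hg : 0 < tmin / t - L t := by
      rw [hfact t ht0]
      apply div_pos _ (by positivity)
      have hp : 0 < (t - t1) * (t - t2) := mul_pos (by linarith) (by linarith)
      exact mul_pos htmin hp
    exact mul_pos hg (dens_pos hl t)
  have hX2int : IntegrableOn (fun t => (tmin / t - L t) * dens tmin l t) (Ioi t2) := by
    have hrw : (fun t => (tmin / t - L t) * dens tmin l t)
        = fun t => tmin / t * dens tmin l t - L t * dens tmin l t := by
      funext t
      ring
    rw [hrw]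
    exact (hGF.mono_set hsub2).sub (hLF.mono_set hsub2)
  have hae : (0 : ℝ → ℝ) ≤ᶠ[ae (volume.restrict (Ioi t2))]
      fun t => (tmin / t - L t) * dens tmin l t := by
    have h := (ae_restrict_iff' (μ := volume) measurableSet_Ioi).2
      (Eventually.of_forall fun t (ht : t ∈ Ioi t2) => (hptX2 t ht).le)
    exact h
  have hX2pos : 0 < ∫ t in Ioi t2, (tmin / t - L t) * dens tmin l t := by
    refine (setIntegral_pos_iff_support_of_nonneg_ae hae hX2int).2 ?_
    have hss : Ioi t2 ⊆ Function.support fun t => (tmin / t - L t) * dens tmin l t :=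
      fun t ht => (hptX2 t ht).ne'
    rw [Set.inter_eq_right.2 hss, Real.volume_Ioi]
    norm_num
  have hLB : (l * tmin / 2) * Real.log (1 + 2 / (l * tmin))
      = (l / 2) * ∫ t in Ioc tmin t2, tmin / t := by
    rw [← intervalIntegral.integral_of_le h02.le, ratio_interval htmin h02]
    have h2 : t2 / tmin = 1 + 2 / (l * tmin) := by
      rw [ht2def]
      field_simp
    rw [h2]
    ring
  have hsplitG := hsplit_gen h02.le _ hGF
  linarith [hsplitG, hcal, hX1eq, hX2eq, hX1nonneg, hX2pos, hLB]

lemma upper_aux {tmin l : ℝ} (htmin : 0 < tmin) (hl : 0 < l) :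
    (∫ t in Ioi tmin, tmin / t * dens tmin l t) <
      l * tmin * Real.log (1 + 1 / (l * tmin)) := by
  obtain ⟨b, hbdef⟩ : ∃ b, b = tmin + 1 / l := ⟨_, rfl⟩
  have h0b : tmin < b := by
    have h : 0 < 1 / l := by positivity
    linarith
  have hbpos : 0 < b := htmin.trans h0b
  obtain ⟨c, hcdef⟩ : ∃ c, c = tmin / b := ⟨_, rfl⟩
  have hcpos : 0 < c := hcdef ▸ div_pos htmin hbpos
  have hGF := integrable_ratio_dens htmin hl
  have hF := integrable_dens (tmin := tmin) hl
  have hsub1 : Ioc tmin b ⊆ Ioi tmin := Ioc_subset_Ioi_self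
  have hsub2 : Ioi b ⊆ Ioi tmin := Ioi_subset_Ioi h0b.le
  have hGIoc : IntegrableOn (fun t => tmin / t) (Ioc tmin b) := by
    apply IntegrableOn.mono_set _ Ioc_subset_Icc_self
    apply ContinuousOn.integrableOn_Icc
    apply ContinuousOn.div continuousOn_const continuousOn_id
    intro x hx
    exact ne_of_gt (lt_of_lt_of_le htmin hx.1)
  have hb1 : l * (b - tmin) = 1 := by
    rw [hbdef]
    field_simp
    ring
  have hconstInt : IntegrableOn (fun _ : ℝ => c * l) (Ioc tmin b) := by
    rw [integrableOn_const_iff]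
    right
    rw [Real.volume_Ioc]
    exact ENNReal.ofReal_lt_top
  have hIocConst : ∫ _t in Ioc tmin b, c * l = (b - tmin) * (c * l) := by
    rw [setIntegral_const, Real.volume_real_Ioc_of_le h0b.le]
    rw [smul_eq_mul]
  have iG1 : IntegrableOn (fun t => l * (tmin / t)) (Ioc tmin b) := hGIoc.const_mul _
  have iGF1 : IntegrableOn (fun t => tmin / t * dens tmin l t) (Ioc tmin b) :=
    hGF.mono_set hsub1
  have iF1 : IntegrableOn (fun t => c * dens tmin l t) (Ioc tmin b) :=
    (hF.mono_set hsub1).const_mul _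
  have iA : IntegrableOn (fun t => l * (tmin / t) - tmin / t * dens tmin l t) (Ioc tmin b) :=
    iG1.sub iGF1
  have iB : IntegrableOn (fun t => c * l - c * dens tmin l t) (Ioc tmin b) :=
    hconstInt.sub iF1
  have hX1eq : ∫ t in Ioc tmin b, (tmin / t - c) * (l - dens tmin l t)
      = ((l * ∫ t in Ioc tmin b, tmin / t)
          - ∫ t in Ioc tmin b, tmin / t * dens tmin l t)
        - ((b - tmin) * (c * l) - c * ∫ t in Ioc tmin b, dens tmin l t) := by
    have hrw : (fun t => (tmin / t - c) * (l - dens tmin l t))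
        = fun t => (l * (tmin / t) - tmin / t * dens tmin l t)
            - (c * l - c * dens tmin l t) := by
      funext t
      ring
    rw [hrw, integral_sub iA iB, integral_sub iG1 iGF1, integral_sub hconstInt iF1,
      hIocConst, integral_const_mul, integral_const_mul]
  have hX2eq : ∫ t in Ioi b, (c - tmin / t) * dens tmin l t
      = c * (∫ t in Ioi b, dens tmin l t)
        - ∫ t in Ioi b, tmin / t * dens tmin l t := by
    have hrw : (fun t => (c - tmin / t) * dens tmin l t)
        = fun t => c * dens tmin l t - tmin / t * dens tmin l t := by
      funext t
      ring
    rw [hrw, integral_sub ((hF.mono_set hsub2).const_mul _) (hGF.mono_set hsub2),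
      integral_const_mul]
  have hX1nonneg : 0 ≤ ∫ t in Ioc tmin b, (tmin / t - c) * (l - dens tmin l t) := by
    apply setIntegral_nonneg measurableSet_Ioc
    intro t ht
    have ht0 : 0 < t := htmin.trans ht.1
    have hg : 0 ≤ tmin / t - c := by
      rw [hcdef, sub_nonneg, div_le_div_iff₀ hbpos ht0]
      nlinarith [ht.2]
    have hd : 0 ≤ l - dens tmin l t := by
      have hexp : Real.exp (-l * (t - tmin)) ≤ 1 :=
        Real.exp_le_one_iff.2 (by nlinarith [ht.1])
      unfold dens
      nlinarith
    exact mul_nonneg hg hd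
  have hptX2 : ∀ t ∈ Ioi b, 0 < (c - tmin / t) * dens tmin l t := by
    intro t ht
    have ht' : b < t := ht
    have hg : 0 < c - tmin / t := by
      rw [hcdef, sub_pos]
      exact div_lt_div_of_pos_left htmin hbpos ht'
    exact mul_pos hg (dens_pos hl t)
  have hX2int : IntegrableOn (fun t => (c - tmin / t) * dens tmin l t) (Ioi b) := by
    have hrw : (fun t => (c - tmin / t) * dens tmin l t)
        = fun t => c * dens tmin l t - tmin / t * dens tmin l t := by
      funext t
      ring
    rw [hrw]
    exact ((hF.mono_set hsub2).const_mul _).sub (hGF.mono_set hsub2)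
  have hae : (0 : ℝ → ℝ) ≤ᶠ[ae (volume.restrict (Ioi b))]
      fun t => (c - tmin / t) * dens tmin l t := by
    have h := (ae_restrict_iff' (μ := volume) measurableSet_Ioi).2
      (Eventually.of_forall fun t (ht : t ∈ Ioi b) => (hptX2 t ht).le)
    exact h
  have hX2pos : 0 < ∫ t in Ioi b, (c - tmin / t) * dens tmin l t := by
    refine (setIntegral_pos_iff_support_of_nonneg_ae hae hX2int).2 ?_
    have hss : Ioi b ⊆ Function.support fun t => (c - tmin / t) * dens tmin l t :=
      fun t ht => (hptX2 t ht).ne'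
    rw [Set.inter_eq_right.2 hss, Real.volume_Ioi]
    norm_num
  have hUB : l * tmin * Real.log (1 + 1 / (l * tmin))
      = l * ∫ t in Ioc tmin b, tmin / t := by
    rw [← intervalIntegral.integral_of_le h0b.le, ratio_interval htmin h0b]
    have h2 : b / tmin = 1 + 1 / (l * tmin) := by
      rw [hbdef]
      field_simp
    rw [h2]
    ring
  have hFtot : (∫ t in Ioc tmin b, dens tmin l t) + (∫ t in Ioi b, dens tmin l t) = 1 := by
    rw [← hsplit_gen h0b.le _ hF]
    exact integral_dens hl
  have hclb : (b - tmin) * (c * l) = c := by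
    linear_combination c * hb1
  have hcu : c * (∫ t in Ioc tmin b, dens tmin l t)
      + c * (∫ t in Ioi b, dens tmin l t) = c := by
    linear_combination c * hFtot
  have hsplitG := hsplit_gen h0b.le _ hGF
  linarith [hsplitG, hX1eq, hX2eq, hX1nonneg, hX2pos, hUB, hclb, hcu]

end SEP


open SEP in
/-- For the shifted exponential distribution `D` on `[tmin, ∞)` with density
`λ e^{−λ(t − tmin)}` (equivalently, CDF `F(t) = 1 − e^{−λ(t − tmin)}` for `t ≥ tmin`), where
`tmin > 0` and `λ > 0`, we have
`(λ tmin / 2) · ln(1 + 2/(λ tmin)) < E_{t∼D}[tmin/t] < λ tmin · ln(1 + 1/(λ tmin))`. -/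
theorem shifted_exponential_expected_ratio_bounds
    (tmin l : ℝ) (htmin : 0 < tmin) (hl : 0 < l)
    (D : Measure ℝ)
    (hD : D = (volume.restrict (Set.Ici tmin)).withDensity
        (fun t => ENNReal.ofReal (l * Real.exp (-l * (t - tmin))))) :
    (l * tmin / 2) * Real.log (1 + 2 / (l * tmin)) < (∫ t, tmin / t ∂D)
      ∧ (∫ t, tmin / t ∂D) < l * tmin * Real.log (1 + 1 / (l * tmin)) := by
  have hmeas : Measurable fun t : ℝ => (l * Real.exp (-l * (t - tmin))).toNNReal := by
    apply Measurable.real_toNNReal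
    exact (dens_cont tmin l).measurable
  have hred : (∫ t, tmin / t ∂D) = ∫ t in Set.Ioi tmin, tmin / t * dens tmin l t := by
    rw [hD]
    have hofReal : (fun t : ℝ => ENNReal.ofReal (l * Real.exp (-l * (t - tmin))))
        = fun t : ℝ => ((l * Real.exp (-l * (t - tmin))).toNNReal : ENNReal) := rfl
    rw [hofReal, integral_withDensity_eq_integral_smul hmeas]
    have hfun : (fun t : ℝ => (l * Real.exp (-l * (t - tmin))).toNNReal • (tmin / t))
        = fun t : ℝ => tmin / t * dens tmin l t := by
      funext t
      rw [NNReal.smul_def, Real.coe_toNNReal _ (mul_nonneg hl.le (Real.exp_pos _).le),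
        smul_eq_mul]
      unfold dens
      ring
    rw [hfun, MeasureTheory.integral_Ici_eq_integral_Ioi]
  rw [hred]
  exact ⟨lower_aux htmin hl, upper_aux htmin hl⟩
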